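/- (Binomial lemma for functional open R-matrices.) Let M be an R-matrix on A with legs i : X → A and j : Y → A, and N an R-matrix on B with legs i' : Y → B and j' : Z → B, such that every i(x) is a source of M, every j(y) is a sink of M, every i'(y) is a source of N, and every j'(z) is a sink of N, and such that j and i' are injective. Let P = A +_Y B be the pushout of sets of j and i', with injections a : A → P and b : B → P, and let S = a_*(M) ⊔ b_*(N). Then for every n ≥ 0 and all x ∈ X, z ∈ Z: Sⁿ( a(i(x)), b(j'(z)) ) = ⨆_{k+l=n} ⨆_{y∈Y} Mᵏ(i(x), j(y)) · Nˡ(i'(y), j'(z)); that is, ■(Sⁿ) = ⨆_{k+l=n} ■(Mᵏ)·■(Nˡ) as rectangular matrices X × Z → R. -/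

import Mathlib

open IsQuantale

section Defs

variable {R : Type*} [CompleteLattice R] [CommMonoid R]

/-- The matrix product of two `R`-matrices: `(M N)(i,k) = ⨆ j, M i j * N j k`. -/
def matMul {X : Type*} (M N : X → X → R) : X → X → R :=
  fun i k => ⨆ j, M i j * N j k

/-- The identity `R`-matrix `1_X`: `1` on the diagonal and `⊥` off the diagonal. -/
def matId (X : Type*) : X → X → R :=
  fun i j => ⨆ _ : i = j, (1 : R)

/-- The `n`-fold matrix power, with `M⁰ = 1_X`. -/
def matPow {X : Type*} (M : X → X → R) : ℕ → X → X → R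
  | 0 => matId X
  | n + 1 => matMul M (matPow M n)

/-- The solution of the algebraic path problem: `F(M) = ⨆ n, Mⁿ`. -/
def pathF {X : Type*} (M : X → X → R) : X → X → R :=
  fun i j => ⨆ n, matPow M n i j

/-- An `R`-category on `X` is an `R`-matrix `C` with `1_X ≤ C` and `C·C ≤ C`. -/
def IsRCat {X : Type*} (C : X → X → R) : Prop :=
  matId X ≤ C ∧ matMul C C ≤ C

/-- The pushforward of an `R`-matrix along a function. -/
def pushforward {X Y : Type*} (f : X → Y) (M : X → X → R) : Y → Y → R :=
  fun y y' => ⨆ p : {q : X × X // f q.1 = y ∧ f q.2 = y'}, M p.1.1 p.1.2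

/-- The block sum `M ⊕ N` of two `R`-matrices on the disjoint union. -/
def blockSum {X Y : Type*} (M : X → X → R) (N : Y → Y → R) : (X ⊕ Y) → (X ⊕ Y) → R
  | Sum.inl x, Sum.inl x' => M x x'
  | Sum.inr y, Sum.inr y' => N y y'
  | _, _ => ⊥

/-- A vertex `v` is a source of `M` if `M c v = ⊥` for all `c`. -/
def IsSource {X : Type*} (M : X → X → R) (v : X) : Prop := ∀ c, M c v = ⊥

/-- A vertex `v` is a sink of `M` if `M v c = ⊥` for all `c`. -/
def IsSink {X : Type*} (M : X → X → R) (v : X) : Prop := ∀ c, M v c = ⊥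

end Defs

/-- The relation generating the pushout of sets of `f : Z → X` and `g : Z → Y`. -/
def pushoutRel {Z X Y : Type*} (f : Z → X) (g : Z → Y) : (X ⊕ Y) → (X ⊕ Y) → Prop :=
  fun p q => ∃ z, p = Sum.inl (f z) ∧ q = Sum.inr (g z)

/-- The pushout of sets `X +_Z Y`: the quotient of the disjoint union `X ⊕ Y`
by the equivalence relation generated by `f z ∼ g z`. -/
def SetPushout {Z X Y : Type*} (f : Z → X) (g : Z → Y) : Type _ :=
  Quot (pushoutRel f g)

/-- The first injection `X → X +_Z Y` into the pushout of sets. -/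
def poInl {Z X Y : Type*} (f : Z → X) (g : Z → Y) : X → SetPushout f g :=
  fun x => Quot.mk _ (Sum.inl x)

/-- The second injection `Y → X +_Z Y` into the pushout of sets. -/
def poInr {Z X Y : Type*} (f : Z → X) (g : Z → Y) : Y → SetPushout f g :=
  fun y => Quot.mk _ (Sum.inr y)


section PO
variable {Y A B : Type*} {j : Y → A} {i' : Y → B}

/-- Explicit description of the pushout equivalence relation when both legs are injective. -/
def poRel' (j : Y → A) (i' : Y → B) : (A ⊕ B) → (A ⊕ B) → Prop :=
  fun p q => p = q ∨ (∃ y, p = Sum.inl (j y) ∧ q = Sum.inr (i' y)) ∨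
    (∃ y, q = Sum.inl (j y) ∧ p = Sum.inr (i' y))

lemma poRel'_symm {p q : A ⊕ B} (h : poRel' j i' p q) : poRel' j i' q p := by
  rcases h with rfl | h | h
  · exact Or.inl rfl
  · exact Or.inr (Or.inr h)
  · exact Or.inr (Or.inl h)

lemma poRel'_trans (hj : Function.Injective j) (hi' : Function.Injective i')
    {p q r : A ⊕ B} (h1 : poRel' j i' p q) (h2 : poRel' j i' q r) : poRel' j i' p r := by
  rcases h1 with rfl | ⟨y, rfl, rfl⟩ | ⟨y, rfl, rfl⟩
  · exact h2
  · rcases h2 with rfl | ⟨y', hy', _⟩ | ⟨y', hy', hy''⟩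
    · exact Or.inr (Or.inl ⟨y, rfl, rfl⟩)
    · exact absurd hy' (by simp)
    · obtain rfl : y' = y := hi' (Sum.inr.inj hy'').symm
      exact Or.inl (by rw [hy'])
  · rcases h2 with rfl | ⟨y', hy', hy''⟩ | ⟨y', _, hy''⟩
    · exact Or.inr (Or.inr ⟨y, rfl, rfl⟩)
    · obtain rfl : y' = y := hj (Sum.inl.inj hy').symm
      exact Or.inl (by rw [hy''])
    · exact absurd hy'' (by simp)

lemma quot_mk_eq_iff (hj : Function.Injective j) (hi' : Function.Injective i')
    (p q : A ⊕ B) :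
    (Quot.mk (pushoutRel j i') p = Quot.mk (pushoutRel j i') q) ↔ poRel' j i' p q := by
  constructor
  · intro h
    have h' := Quot.eq.mp h
    clear h
    induction h' with
    | rel a b hab => exact Or.inr (Or.inl hab)
    | refl a => exact Or.inl rfl
    | symm a b _ ih => exact poRel'_symm ih
    | trans a b c _ _ ih1 ih2 => exact poRel'_trans hj hi' ih1 ih2
  · rintro (rfl | ⟨y, rfl, rfl⟩ | ⟨y, rfl, rfl⟩)
    · rfl
    · exact Quot.sound ⟨y, rfl, rfl⟩
    · exact (Quot.sound ⟨y, rfl, rfl⟩).symm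

lemma poInl_eq_poInl (hj : Function.Injective j) (hi' : Function.Injective i')
    {u u' : A} : poInl j i' u = poInl j i' u' ↔ u = u' := by
  simp only [poInl]
  refine (quot_mk_eq_iff hj hi' _ _).trans ?_
  constructor
  · rintro (h | ⟨y, h, h'⟩ | ⟨y, h, h'⟩)
    · exact Sum.inl.inj h
    · simp at h'
    · simp at h'
  · rintro rfl; exact Or.inl rfl

lemma poInr_eq_poInr (hj : Function.Injective j) (hi' : Function.Injective i')
    {v v' : B} : poInr j i' v = poInr j i' v' ↔ v = v' := by
  simp only [poInr]
  refine (quot_mk_eq_iff hj hi' _ _).trans ?_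
  constructor
  · rintro (h | ⟨y, h, h'⟩ | ⟨y, h, h'⟩)
    · exact Sum.inr.inj h
    · simp at h
    · simp at h
  · rintro rfl; exact Or.inl rfl

lemma poInl_eq_poInr (hj : Function.Injective j) (hi' : Function.Injective i')
    {u : A} {v : B} : poInl j i' u = poInr j i' v ↔ ∃ y, u = j y ∧ v = i' y := by
  simp only [poInl, poInr]
  refine (quot_mk_eq_iff hj hi' _ _).trans ?_
  constructor
  · rintro (h | ⟨y, h, h'⟩ | ⟨y, h, h'⟩)
    · simp at h
    · exact ⟨y, Sum.inl.inj h, Sum.inr.inj h'⟩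
    · simp at h'
  · rintro ⟨y, rfl, rfl⟩; exact Or.inr (Or.inl ⟨y, rfl, rfl⟩)

lemma poInr_eq_poInl (hj : Function.Injective j) (hi' : Function.Injective i')
    {u : A} {v : B} : poInr j i' v = poInl j i' u ↔ ∃ y, u = j y ∧ v = i' y := by
  rw [eq_comm, poInl_eq_poInr hj hi']

end PO

section Entries

variable {R : Type*} [CompleteLattice R] [CommMonoid R] [IsQuantale R]

lemma qmul_bot (x : R) : x * (⊥ : R) = ⊥ := by
  rw [show (⊥ : R) = sSup ∅ by simp, mul_sSup_distrib]; simp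

lemma qbot_mul (x : R) : (⊥ : R) * x = ⊥ := by
  rw [show (⊥ : R) = sSup ∅ by simp, sSup_mul_distrib]; simp

/-- `Sort`-polymorphic version of `mul_iSup_distrib`. -/
lemma qmul_iSup {ι : Sort*} (x : R) (f : ι → R) : (x * ⨆ i, f i) = ⨆ i, x * f i := by
  rw [iSup, mul_sSup_distrib, iSup_range]

/-- `Sort`-polymorphic version of `iSup_mul_distrib`. -/
lemma qiSup_mul {ι : Sort*} (x : R) (f : ι → R) : (⨆ i, f i) * x = ⨆ i, f i * x := by
  rw [iSup, sSup_mul_distrib, iSup_range]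

variable {Y A B : Type*} {j : Y → A} {i' : Y → B}
variable (hj : Function.Injective j) (hi' : Function.Injective i')

/-- Splitting a sup over the pushout into the two injections. -/
lemma iSup_po (F : SetPushout j i' → R) :
    ⨆ p, F p = (⨆ u, F (poInl j i' u)) ⊔ ⨆ v, F (poInr j i' v) := by
  apply le_antisymm
  · apply iSup_le; intro p
    obtain ⟨s, rfl⟩ := Quot.exists_rep p
    cases s with
    | inl u => exact le_trans (le_iSup (fun u => F (poInl j i' u)) u) le_sup_left
    | inr v => exact le_trans (le_iSup (fun v => F (poInr j i' v)) v) le_sup_right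
  · apply sup_le
    · exact iSup_le fun u => le_iSup F (poInl j i' u)
    · exact iSup_le fun v => le_iSup F (poInr j i' v)

include hj hi'

variable (M : A → A → R) (N : B → B → R)

lemma pf_inl_aa (u u' : A) :
    pushforward (poInl j i') M (poInl j i' u) (poInl j i' u') = M u u' := by
  apply le_antisymm
  · apply iSup_le
    rintro ⟨⟨p1, p2⟩, h1, h2⟩
    obtain rfl := (poInl_eq_poInl hj hi').mp h1
    obtain rfl := (poInl_eq_poInl hj hi').mp h2
    exact le_rfl
  · exact le_iSup_of_le ⟨(u, u'), rfl, rfl⟩ le_rfl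

lemma pf_inr_aa (hNsource : ∀ y, IsSource N (i' y)) (u u' : A) :
    pushforward (poInr j i') N (poInl j i' u) (poInl j i' u') = ⊥ := by
  apply le_antisymm _ bot_le
  apply iSup_le
  rintro ⟨⟨p1, p2⟩, h1, h2⟩
  obtain ⟨y, rfl, rfl⟩ := (poInr_eq_poInl hj hi').mp h2
  exact (hNsource y p1).le

lemma pf_inl_ab (u : A) (w : B) :
    pushforward (poInl j i') M (poInl j i' u) (poInr j i' w)
      = ⨆ y, ⨆ _ : i' y = w, M u (j y) := by
  apply le_antisymm
  · apply iSup_le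
    rintro ⟨⟨p1, p2⟩, h1, h2⟩
    obtain rfl := (poInl_eq_poInl hj hi').mp h1
    obtain ⟨y, rfl, rfl⟩ := (poInl_eq_poInr hj hi').mp h2
    exact le_iSup_of_le y (le_iSup_of_le rfl le_rfl)
  · apply iSup_le; intro y
    apply iSup_le; rintro rfl
    exact le_iSup_of_le ⟨(u, j y), rfl, (poInl_eq_poInr hj hi').mpr ⟨y, rfl, rfl⟩⟩ le_rfl

lemma pf_inr_ab (u : A) (w : B) :
    pushforward (poInr j i') N (poInl j i' u) (poInr j i' w)
      = ⨆ y, ⨆ _ : j y = u, N (i' y) w := by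
  apply le_antisymm
  · apply iSup_le
    rintro ⟨⟨p1, p2⟩, h1, h2⟩
    obtain ⟨y, rfl, rfl⟩ := (poInr_eq_poInl hj hi').mp h1
    obtain rfl := (poInr_eq_poInr hj hi').mp h2
    exact le_iSup_of_le y (le_iSup_of_le rfl le_rfl)
  · apply iSup_le; intro y
    apply iSup_le; rintro rfl
    exact le_iSup_of_le ⟨(i' y, w), (poInr_eq_poInl hj hi').mpr ⟨y, rfl, rfl⟩, rfl⟩ le_rfl

lemma pf_inl_ba (hMsink : ∀ y, IsSink M (j y)) (v : B) (u : A) :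
    pushforward (poInl j i') M (poInr j i' v) (poInl j i' u) = ⊥ := by
  apply le_antisymm _ bot_le
  apply iSup_le
  rintro ⟨⟨p1, p2⟩, h1, h2⟩
  obtain ⟨y, rfl, rfl⟩ := (poInl_eq_poInr hj hi').mp h1
  exact (hMsink y p2).le

lemma pf_inr_ba (hNsource : ∀ y, IsSource N (i' y)) (v : B) (u : A) :
    pushforward (poInr j i') N (poInr j i' v) (poInl j i' u) = ⊥ := by
  apply le_antisymm _ bot_le
  apply iSup_le
  rintro ⟨⟨p1, p2⟩, h1, h2⟩
  obtain ⟨y, rfl, rfl⟩ := (poInr_eq_poInl hj hi').mp h2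
  exact (hNsource y p1).le

lemma pf_inl_bb (hMsink : ∀ y, IsSink M (j y)) (v w : B) :
    pushforward (poInl j i') M (poInr j i' v) (poInr j i' w) = ⊥ := by
  apply le_antisymm _ bot_le
  apply iSup_le
  rintro ⟨⟨p1, p2⟩, h1, h2⟩
  obtain ⟨y, rfl, rfl⟩ := (poInl_eq_poInr hj hi').mp h1
  exact (hMsink y p2).le

lemma pf_inr_bb (v w : B) :
    pushforward (poInr j i') N (poInr j i' v) (poInr j i' w) = N v w := by
  apply le_antisymm
  · apply iSup_le
    rintro ⟨⟨p1, p2⟩, h1, h2⟩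
    obtain rfl := (poInr_eq_poInr hj hi').mp h1
    obtain rfl := (poInr_eq_poInr hj hi').mp h2
    exact le_rfl
  · exact le_iSup_of_le ⟨(v, w), rfl, rfl⟩ le_rfl

/-- Powers of `S` between two `B`-points are just powers of `N`. -/
lemma powS_bb (hMsink : ∀ y, IsSink M (j y)) (hNsource : ∀ y, IsSource N (i' y)) (w : B) :
    ∀ n, ∀ v : B,
      matPow (pushforward (poInl j i') M ⊔ pushforward (poInr j i') N) n
        (poInr j i' v) (poInr j i' w) = matPow N n v w := by
  intro n
  induction n with
  | zero =>
    intro v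
    show (⨆ _ : poInr j i' v = poInr j i' w, (1 : R)) = ⨆ _ : v = w, (1 : R)
    simp only [poInr_eq_poInr hj hi']
  | succ n ih =>
    intro v
    have hba : ∀ u : A,
        (pushforward (poInl j i') M ⊔ pushforward (poInr j i') N)
          (poInr j i' v) (poInl j i' u) = ⊥ := by
      intro u
      simp [Pi.sup_apply, pf_inl_ba hj hi' M hMsink, pf_inr_ba hj hi' N hNsource]
    have hbb : ∀ w' : B,
        (pushforward (poInl j i') M ⊔ pushforward (poInr j i') N)
          (poInr j i' v) (poInr j i' w') = N v w' := by
      intro w'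
      simp [Pi.sup_apply, pf_inl_bb hj hi' M hMsink, pf_inr_bb hj hi' N]
    show (⨆ p, (pushforward (poInl j i') M ⊔ pushforward (poInr j i') N) (poInr j i' v) p *
        matPow _ n p (poInr j i' w)) = matPow N (n + 1) v w
    rw [iSup_po]
    simp only [hba, hbb, qbot_mul, ih]
    simp [matPow, matMul]

end Entries

section Main

variable {R : Type*} [CompleteLattice R] [CommMonoid R] [IsQuantale R]
variable {A B X Y Z : Type*}

/-- The binomial lemma for powers of `S`, with nested sups and arbitrary source vertex. -/
lemma powS_ab (M : A → A → R) (j : Y → A)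
    (N : B → B → R) (i' : Y → B) (j' : Z → B)
    (hMsink : ∀ y : Y, IsSink M (j y))
    (hNsource : ∀ y : Y, IsSource N (i' y))
    (hj : Function.Injective j) (hi' : Function.Injective i') (z : Z) :
    ∀ n, ∀ u : A,
      matPow (pushforward (poInl j i') M ⊔ pushforward (poInr j i') N) n
          (poInl j i' u) (poInr j i' (j' z)) =
        ⨆ k, ⨆ l, ⨆ _ : k + l = n, ⨆ y : Y,
          matPow M k u (j y) * matPow N l (i' y) (j' z) := by
  intro n
  induction n with
  | zero =>
    intro u
    show (⨆ _ : poInl j i' u = poInr j i' (j' z), (1 : R)) = _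
    apply le_antisymm
    · apply iSup_le; intro h
      obtain ⟨y, rfl, hy⟩ := (poInl_eq_poInr hj hi').mp h
      refine le_iSup_of_le 0 (le_iSup_of_le 0 (le_iSup_of_le rfl (le_iSup_of_le y ?_)))
      have h1 : (1 : R) ≤ matPow M 0 (j y) (j y) := le_iSup_of_le rfl le_rfl
      have h2 : (1 : R) ≤ matPow N 0 (i' y) (j' z) := le_iSup_of_le hy.symm le_rfl
      simpa using mul_le_mul' h1 h2
    · apply iSup_le; intro k
      apply iSup_le; intro l
      apply iSup_le; intro h
      apply iSup_le; intro y
      obtain ⟨rfl, rfl⟩ : k = 0 ∧ l = 0 := by omega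
      show matId A u (j y) * matId B (i' y) (j' z) ≤ _
      rw [matId, matId, qiSup_mul]
      apply iSup_le; intro h1
      rw [qmul_iSup]
      apply iSup_le; intro h2
      have : poInl j i' u = poInr j i' (j' z) :=
        (poInl_eq_poInr hj hi').mpr ⟨y, h1, h2.symm⟩
      rw [one_mul]
      exact le_iSup_of_le this le_rfl
  | succ n ih =>
    intro u
    have hSaa : ∀ u' : A,
        (pushforward (poInl j i') M ⊔ pushforward (poInr j i') N)
          (poInl j i' u) (poInl j i' u') = M u u' := by
      intro u'
      simp [Pi.sup_apply, pf_inl_aa hj hi' M, pf_inr_aa hj hi' N hNsource]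
    have hSab : ∀ w : B,
        (pushforward (poInl j i') M ⊔ pushforward (poInr j i') N)
          (poInl j i' u) (poInr j i' w) =
        (⨆ y, ⨆ _ : i' y = w, M u (j y)) ⊔ ⨆ y, ⨆ _ : j y = u, N (i' y) w := by
      intro w
      simp [Pi.sup_apply, pf_inl_ab hj hi' M, pf_inr_ab hj hi' N]
    show (⨆ p, (pushforward (poInl j i') M ⊔ pushforward (poInr j i') N) (poInl j i' u) p *
        matPow _ n p (poInr j i' (j' z))) = _
    rw [iSup_po]
    simp only [hSaa, hSab, ih, powS_bb hj hi' M N hMsink hNsource (j' z) n]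
    apply le_antisymm
    · apply sup_le
      · -- paths starting with an M-step
        apply iSup_le; intro u'
        simp only [qmul_iSup]
        apply iSup_le; intro k
        apply iSup_le; intro l
        apply iSup_le; intro h
        apply iSup_le; intro y
        refine le_iSup_of_le (k + 1) (le_iSup_of_le l (le_iSup_of_le (by omega)
          (le_iSup_of_le y ?_)))
        rw [← mul_assoc]
        refine mul_le_mul' ?_ le_rfl
        exact le_iSup_of_le u' le_rfl
      · apply iSup_le; intro w
        rw [Quantale.sup_mul_distrib]
        apply sup_le
        · -- crossing step: M into the glue vertex
          rw [qiSup_mul]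
          apply iSup_le; intro y
          rw [qiSup_mul]
          apply iSup_le; intro h
          subst h
          refine le_iSup_of_le 1 (le_iSup_of_le n (le_iSup_of_le (by omega)
            (le_iSup_of_le y ?_)))
          refine mul_le_mul' ?_ le_rfl
          have h1 : (1 : R) ≤ matId A (j y) (j y) := le_iSup_of_le rfl le_rfl
          have : M u (j y) * 1 ≤ M u (j y) * matId A (j y) (j y) := mul_le_mul' le_rfl h1
          rw [mul_one] at this
          exact le_trans this (le_iSup_of_le (j y) le_rfl)
        · -- starting at a glue vertex: pure N-paths
          rw [qiSup_mul]
          apply iSup_le; intro y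
          rw [qiSup_mul]
          apply iSup_le; intro h
          refine le_iSup_of_le 0 (le_iSup_of_le (n + 1) (le_iSup_of_le (by omega)
            (le_iSup_of_le y ?_)))
          have h1 : (1 : R) ≤ matPow M 0 u (j y) := le_iSup_of_le h.symm le_rfl
          have h2 : N (i' y) w * matPow N n w (j' z) ≤ matPow N (n + 1) (i' y) (j' z) :=
            le_iSup_of_le w le_rfl
          calc N (i' y) w * matPow N n w (j' z)
              ≤ matPow N (n + 1) (i' y) (j' z) := h2
            _ = 1 * matPow N (n + 1) (i' y) (j' z) := (one_mul _).symm
            _ ≤ matPow M 0 u (j y) * matPow N (n + 1) (i' y) (j' z) :=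
                mul_le_mul' h1 le_rfl
    · apply iSup_le; intro k
      apply iSup_le; intro l
      apply iSup_le; intro h
      apply iSup_le; intro y
      match k, h with
      | 0, h =>
        obtain rfl : l = n + 1 := by omega
        show matId A u (j y) * matPow N (n + 1) (i' y) (j' z) ≤ _
        rw [matId, qiSup_mul]
        apply iSup_le; intro hu
        rw [one_mul]
        show matMul N (matPow N n) (i' y) (j' z) ≤ _
        rw [matMul]
        apply iSup_le; intro w
        refine le_trans ?_ le_sup_right
        refine le_iSup_of_le w (mul_le_mul' ?_ le_rfl)
        exact le_trans
          (le_iSup_of_le y (le_iSup (fun _ : j y = u => N (i' y) w) hu.symm)) le_sup_right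
      | (k + 1), h =>
        have hn : k + l = n := by omega
        show matMul M (matPow M k) u (j y) * matPow N l (i' y) (j' z) ≤ _
        rw [matMul, qiSup_mul]
        apply iSup_le; intro u'
        rw [mul_assoc]
        refine le_trans ?_ le_sup_left
        refine le_iSup_of_le u' (mul_le_mul' le_rfl ?_)
        exact le_iSup_of_le k (le_iSup_of_le l (le_iSup_of_le hn (le_iSup_of_le y le_rfl)))

end Main

/-- Binomial lemma for functional open `R`-matrices: with `M` on `A`
(legs `i : X → A`, `j : Y → A`), `N` on `B` (legs `i' : Y → B`, `j' : Z → B`), inputs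
sources, outputs sinks, `j` and `i'` injective, `P = A +_Y B` the pushout of sets with
injections `a, b`, and `S = a_*(M) ⊔ b_*(N)`, we have for every `n`:
`Sⁿ(a (i x), b (j' z)) = ⨆_{k+l=n} ⨆ y, Mᵏ(i x, j y) · Nˡ(i' y, j' z)`. -/
theorem binomial_functional {R : Type*} [CompleteLattice R] [CommMonoid R] [IsQuantale R]
    {A B X Y Z : Type*}
    (M : A → A → R) (i : X → A) (j : Y → A)
    (N : B → B → R) (i' : Y → B) (j' : Z → B)
    (hMsource : ∀ x : X, IsSource M (i x)) (hMsink : ∀ y : Y, IsSink M (j y))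
    (hNsource : ∀ y : Y, IsSource N (i' y)) (hNsink : ∀ z : Z, IsSink N (j' z))
    (hj : Function.Injective j) (hi' : Function.Injective i') :
    ∀ (n : ℕ) (x : X) (z : Z),
      matPow (pushforward (poInl j i') M ⊔ pushforward (poInr j i') N) n
          (poInl j i' (i x)) (poInr j i' (j' z)) =
        ⨆ p : {p : ℕ × ℕ // p.1 + p.2 = n}, ⨆ y : Y,
          matPow M p.1.1 (i x) (j y) * matPow N p.1.2 (i' y) (j' z) := by
  intro n x z
  rw [powS_ab M j N i' j' hMsink hNsource hj hi' z n (i x)]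
  apply le_antisymm
  · apply iSup_le; intro k
    apply iSup_le; intro l
    apply iSup_le; intro h
    apply iSup_le; intro y
    exact le_iSup_of_le ⟨(k, l), h⟩ (le_iSup_of_le y le_rfl)
  · apply iSup_le
    rintro ⟨⟨k, l⟩, h⟩
    apply iSup_le; intro y
    exact le_iSup_of_le k (le_iSup_of_le l (le_iSup_of_le h (le_iSup_of_le y le_rfl)))
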